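/- There exist constants C > 0 and r₀ > 1 such that for all r ≥ r₀, |R(r)| ≤ C·(log r)^(−(β+1)). -/

import Mathlib

set_option maxHeartbeats 1000000


open Real

/-- The scalar curvature of the metric, restricted to the radial variable `r`. -/
noncomputable def RscalFJ (n : ℕ) (α β : ℝ) (r : ℝ) : ℝ :=
  let y : ℝ := α + Real.log (1 + r ^ 2)
  let D : ℝ := y ^ (β + 1) - α ^ (β + 1)
  let g11 : ℝ := α ^ β * (1 + r ^ 2) / y ^ β
  let gv : ℝ := (β + 1) * α ^ β * r ^ 2 / D
  let R11 : ℝ := (β / y - 1) / (1 + r ^ 2) ^ 2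
    + ((n : ℝ) - 1) * (β + 1) * y ^ β / (D * (1 + r ^ 2))
    - β * r ^ 2 / (y ^ 2 * (1 + r ^ 2) ^ 2)
    + ((n : ℝ) - 1) * (β + 1) * y ^ (β - 1) * (β - y) * r ^ 2 / (D * (1 + r ^ 2) ^ 2)
    - ((n : ℝ) - 1) * (β + 1) ^ 2 * y ^ (2 * β) * r ^ 2 / (D ^ 2 * (1 + r ^ 2) ^ 2)
  let Rv : ℝ := (β / y - 1) / (1 + r ^ 2) - ((n : ℝ) - 1) / r ^ 2
    + ((n : ℝ) - 1) * (β + 1) * y ^ β / (D * (1 + r ^ 2))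
  g11 * R11 + ((n : ℝ) - 1) * gv * Rv


section AuxStmt17
variable {m a u y t D rr β : ℝ}

lemma as17_b1 (ha : 0 < a) (hu : 0 < u) (hy : 2 ≤ y) (hβ : 0 ≤ β) (hβy : β ≤ y)
    (hyt : y ≤ t) :
    |a * t / u * ((β / y - 1) / t ^ 2)| ≤ 1 * a / (u * y) := by
  have hy0 : (0:ℝ) < y := by linarith
  have ht0 : (0:ℝ) < t := by linarith
  have hP : (0:ℝ) < u * y := by positivity
  have hyβ : (0:ℝ) ≤ y - β := by linarith
  have heq : a * t / u * ((β / y - 1) / t ^ 2) = -(a * (y - β) / (u * (y * t))) := by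
    field_simp; ring
  rw [heq, abs_neg, abs_of_nonneg (div_nonneg (mul_nonneg ha.le hyβ) (by positivity)),
    div_le_div_iff₀ (by positivity) hP]
  nlinarith [mul_le_mul_of_nonneg_left (by linarith : y - β ≤ t) (mul_nonneg ha.le hP.le)]

lemma as17_b2 (hm : 1 ≤ m) (ha : 0 < a) (hu : 0 < u) (hy : 2 ≤ y) (hβ : 0 ≤ β)
    (hyt : y ≤ t) (hD2 : u * y ≤ 2 * D) :
    |a * t / u * (m * (β + 1) * u / (D * t))| ≤ 2 * m * (β + 1) * a / (u * y) := by
  have hy0 : (0:ℝ) < y := by linarith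
  have ht0 : (0:ℝ) < t := by linarith
  have hP : (0:ℝ) < u * y := by positivity
  have hD0 : (0:ℝ) < D := by nlinarith
  have heq : a * t / u * (m * (β + 1) * u / (D * t)) = a * m * (β + 1) / D := by
    field_simp
  rw [heq, abs_of_nonneg (by positivity), div_le_div_iff₀ hD0 hP]
  nlinarith [mul_le_mul_of_nonneg_left hD2 (by positivity : (0:ℝ) ≤ a * m * (β + 1))]

lemma as17_b3 (ha : 0 < a) (hu : 0 < u) (hy : 2 ≤ y) (hβ : 0 ≤ β)
    (hyt : y ≤ t) (hrr : 0 < rr) (hrt : rr ≤ t) :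
    |a * t / u * (β * rr / (y ^ 2 * t ^ 2))| ≤ (β + 1) * a / (u * y) := by
  have hy0 : (0:ℝ) < y := by linarith
  have ht0 : (0:ℝ) < t := by linarith
  have hP : (0:ℝ) < u * y := by positivity
  have heq : a * t / u * (β * rr / (y ^ 2 * t ^ 2)) = a * (β * (rr * y)) / (u * y * (y ^ 2 * t)) := by
    field_simp
  rw [heq, abs_of_nonneg (by positivity), div_le_div_iff₀ (by positivity) hP]
  have k0 : rr * y ≤ t * y ^ 2 :=
    mul_le_mul hrt (by nlinarith : y ≤ y ^ 2) hy0.le ht0.le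
  have k1 : β * (rr * y) ≤ (β + 1) * (t * y ^ 2) :=
    mul_le_mul (by linarith) k0 (by positivity) (by linarith)
  nlinarith [mul_le_mul_of_nonneg_left k1 (by positivity : (0:ℝ) ≤ a * (u * y))]

lemma as17_key4 (hu : 0 < u) (hy : 2 ≤ y) (hβ : 0 ≤ β) (hβy : β ≤ y) (hyt : y ≤ t)
    (hrr : 0 < rr) (hrt : rr ≤ t) (hD2 : u * y ≤ 2 * D) :
    (y - β) * rr * (u * y) ≤ y * t * (2 * D) := by
  have hy0 : (0:ℝ) < y := by linarith
  have hP : (0:ℝ) < u * y := by positivity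
  have ht0 : (0:ℝ) < t := by linarith
  have t1 : (y - β) * rr ≤ y * t := mul_le_mul (by linarith) hrt hrr.le hy0.le
  exact mul_le_mul t1 hD2 hP.le (mul_nonneg hy0.le ht0.le)

lemma as17_b4 (hm : 1 ≤ m) (ha : 0 < a) (hu : 0 < u) (hy : 2 ≤ y) (hβ : 0 ≤ β)
    (hβy : β ≤ y) (hyt : y ≤ t) (hrr : 0 < rr) (hrt : rr ≤ t) (hD2 : u * y ≤ 2 * D) :
    |a * t / u * (m * (β + 1) * (u / y) * (β - y) * rr / (D * t ^ 2))|
      ≤ 2 * m * (β + 1) * a / (u * y) := by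
  have hy0 : (0:ℝ) < y := by linarith
  have ht0 : (0:ℝ) < t := by linarith
  have hP : (0:ℝ) < u * y := by positivity
  have hD0 : (0:ℝ) < D := by nlinarith
  have hyβ : (0:ℝ) ≤ y - β := by linarith
  have heq : a * t / u * (m * (β + 1) * (u / y) * (β - y) * rr / (D * t ^ 2))
      = -(m * (β + 1) * a * ((y - β) * rr) / (y * (D * t))) := by
    field_simp; ring
  rw [heq, abs_neg, abs_of_nonneg (div_nonneg (by positivity) (by positivity)),
    div_le_div_iff₀ (by positivity) hP]
  nlinarith [mul_le_mul_of_nonneg_left (as17_key4 hu hy hβ hβy hyt hrr hrt hD2)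
    (by positivity : (0:ℝ) ≤ m * (β + 1) * a)]

lemma as17_key5 (hu : 0 < u) (hy : 2 ≤ y) (hyt : y ≤ t) (hrr : 0 < rr)
    (hrt : rr ≤ t) (hD2 : u * y ≤ 2 * D) :
    u * rr * (u * y) ≤ 4 * (D ^ 2 * t) := by
  have hy0 : (0:ℝ) < y := by linarith
  have ht0 : (0:ℝ) < t := by linarith
  have hP : (0:ℝ) < u * y := by positivity
  have hD0 : (0:ℝ) < D := by nlinarith
  have k1 : u * y * (u * y) ≤ 2 * D * (2 * D) := mul_le_mul hD2 hD2 hP.le (by linarith)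
  have k2 : u * rr ≤ u * y * t := by
    nlinarith [mul_le_mul_of_nonneg_left hrt hu.le,
      mul_nonneg (mul_nonneg hu.le ht0.le) (by linarith : (0:ℝ) ≤ y - 1)]
  nlinarith [mul_le_mul_of_nonneg_right k2 hP.le, mul_le_mul_of_nonneg_right k1 ht0.le]

lemma as17_b5 (hm : 1 ≤ m) (ha : 0 < a) (hu : 0 < u) (hy : 2 ≤ y) (hβ : 0 ≤ β)
    (hyt : y ≤ t) (hrr : 0 < rr) (hrt : rr ≤ t) (hD2 : u * y ≤ 2 * D) :
    |a * t / u * (m * (β + 1) ^ 2 * u ^ 2 * rr / (D ^ 2 * t ^ 2))|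
      ≤ 4 * m * (β + 1) ^ 2 * a / (u * y) := by
  have hy0 : (0:ℝ) < y := by linarith
  have ht0 : (0:ℝ) < t := by linarith
  have hP : (0:ℝ) < u * y := by positivity
  have hD0 : (0:ℝ) < D := by nlinarith
  have heq : a * t / u * (m * (β + 1) ^ 2 * u ^ 2 * rr / (D ^ 2 * t ^ 2))
      = m * (β + 1) ^ 2 * a * (u * rr) / (D ^ 2 * t) := by
    field_simp
  rw [heq, abs_of_nonneg (by positivity), div_le_div_iff₀ (by positivity) hP]
  nlinarith [mul_le_mul_of_nonneg_left (as17_key5 hu hy hyt hrr hrt hD2)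
    (by positivity : (0:ℝ) ≤ m * (β + 1) ^ 2 * a)]

lemma as17_b6 (hm : 1 ≤ m) (ha : 0 < a) (hu : 0 < u) (hy : 2 ≤ y) (hβ : 0 ≤ β)
    (hβy : β ≤ y) (hyt : y ≤ t) (hrr : 0 < rr) (hrt : rr ≤ t) (hD2 : u * y ≤ 2 * D) :
    |m * ((β + 1) * a * rr / D) * ((β / y - 1) / t)| ≤ 2 * m * (β + 1) * a / (u * y) := by
  have hy0 : (0:ℝ) < y := by linarith
  have ht0 : (0:ℝ) < t := by linarith
  have hP : (0:ℝ) < u * y := by positivity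
  have hD0 : (0:ℝ) < D := by nlinarith
  have hyβ : (0:ℝ) ≤ y - β := by linarith
  have heq : m * ((β + 1) * a * rr / D) * ((β / y - 1) / t)
      = -(m * (β + 1) * a * ((y - β) * rr) / (y * (D * t))) := by
    field_simp; ring
  rw [heq, abs_neg, abs_of_nonneg (div_nonneg (by positivity) (by positivity)),
    div_le_div_iff₀ (by positivity) hP]
  nlinarith [mul_le_mul_of_nonneg_left (as17_key4 hu hy hβ hβy hyt hrr hrt hD2)
    (by positivity : (0:ℝ) ≤ m * (β + 1) * a)]

lemma as17_b7 (hm : 1 ≤ m) (ha : 0 < a) (hu : 0 < u) (hy : 2 ≤ y) (hβ : 0 ≤ β)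
    (hrr : 0 < rr) (hD2 : u * y ≤ 2 * D) :
    |m * ((β + 1) * a * rr / D) * (m / rr)| ≤ 2 * m ^ 2 * (β + 1) * a / (u * y) := by
  have hy0 : (0:ℝ) < y := by linarith
  have hP : (0:ℝ) < u * y := by positivity
  have hD0 : (0:ℝ) < D := by nlinarith
  have heq : m * ((β + 1) * a * rr / D) * (m / rr) = m ^ 2 * (β + 1) * a / D := by
    field_simp
  rw [heq, abs_of_nonneg (by positivity), div_le_div_iff₀ hD0 hP]
  nlinarith [mul_le_mul_of_nonneg_left hD2 (by positivity : (0:ℝ) ≤ m ^ 2 * (β + 1) * a)]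

lemma as17_b8 (hm : 1 ≤ m) (ha : 0 < a) (hu : 0 < u) (hy : 2 ≤ y) (hβ : 0 ≤ β)
    (hyt : y ≤ t) (hrr : 0 < rr) (hrt : rr ≤ t) (hD2 : u * y ≤ 2 * D) :
    |m * ((β + 1) * a * rr / D) * (m * (β + 1) * u / (D * t))|
      ≤ 4 * m ^ 2 * (β + 1) ^ 2 * a / (u * y) := by
  have hy0 : (0:ℝ) < y := by linarith
  have ht0 : (0:ℝ) < t := by linarith
  have hP : (0:ℝ) < u * y := by positivity
  have hD0 : (0:ℝ) < D := by nlinarith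
  have heq : m * ((β + 1) * a * rr / D) * (m * (β + 1) * u / (D * t))
      = m ^ 2 * (β + 1) ^ 2 * a * (u * rr) / (D ^ 2 * t) := by
    field_simp
  rw [heq, abs_of_nonneg (by positivity), div_le_div_iff₀ (by positivity) hP]
  nlinarith [mul_le_mul_of_nonneg_left (as17_key5 hu hy hyt hrr hrt hD2)
    (by positivity : (0:ℝ) ≤ m ^ 2 * (β + 1) ^ 2 * a)]

lemma aux_stmt17 (m a u y t D rr β : ℝ) (hm : 1 ≤ m) (ha : 0 < a) (hu : 0 < u)
    (hy : 2 ≤ y) (hβ : 0 ≤ β) (hβy : β ≤ y) (hyt : y ≤ t) (hrr : 0 < rr)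
    (hrt : rr ≤ t) (hD2 : u * y ≤ 2 * D) :
    |a * t / u * ((β / y - 1) / t ^ 2)
      + a * t / u * (m * (β + 1) * u / (D * t))
      - a * t / u * (β * rr / (y ^ 2 * t ^ 2))
      + a * t / u * (m * (β + 1) * (u / y) * (β - y) * rr / (D * t ^ 2))
      - a * t / u * (m * (β + 1) ^ 2 * u ^ 2 * rr / (D ^ 2 * t ^ 2))
      + m * ((β + 1) * a * rr / D) * ((β / y - 1) / t)
      - m * ((β + 1) * a * rr / D) * (m / rr)
      + m * ((β + 1) * a * rr / D) * (m * (β + 1) * u / (D * t))|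
      ≤ 32 * a * m ^ 2 * (β + 1) ^ 2 / (u * y) := by
  have hP : (0:ℝ) < u * y := by positivity
  have hb : (1:ℝ) ≤ β + 1 := by linarith
  set e1 := a * t / u * ((β / y - 1) / t ^ 2)
  set e2 := a * t / u * (m * (β + 1) * u / (D * t))
  set e3 := a * t / u * (β * rr / (y ^ 2 * t ^ 2))
  set e4 := a * t / u * (m * (β + 1) * (u / y) * (β - y) * rr / (D * t ^ 2))
  set e5 := a * t / u * (m * (β + 1) ^ 2 * u ^ 2 * rr / (D ^ 2 * t ^ 2))
  set e6 := m * ((β + 1) * a * rr / D) * ((β / y - 1) / t)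
  set e7 := m * ((β + 1) * a * rr / D) * (m / rr)
  set e8 := m * ((β + 1) * a * rr / D) * (m * (β + 1) * u / (D * t))
  have tri : |e1 + e2 - e3 + e4 - e5 + e6 - e7 + e8| ≤
      |e1| + |e2| + |e3| + |e4| + |e5| + |e6| + |e7| + |e8| := by
    calc |e1 + e2 - e3 + e4 - e5 + e6 - e7 + e8|
        ≤ |e1 + e2 - e3 + e4 - e5 + e6 - e7| + |e8| := abs_add_le _ _
      _ ≤ (|e1 + e2 - e3 + e4 - e5 + e6| + |e7|) + |e8| := by
          gcongr; exact abs_sub _ _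
      _ ≤ ((|e1 + e2 - e3 + e4 - e5| + |e6|) + |e7|) + |e8| := by gcongr; exact abs_add_le _ _
      _ ≤ (((|e1 + e2 - e3 + e4| + |e5|) + |e6|) + |e7|) + |e8| := by
          gcongr; exact abs_sub _ _
      _ ≤ ((((|e1 + e2 - e3| + |e4|) + |e5|) + |e6|) + |e7|) + |e8| := by
          gcongr; exact abs_add_le _ _
      _ ≤ (((((|e1 + e2| + |e3|) + |e4|) + |e5|) + |e6|) + |e7|) + |e8| := by
          gcongr; exact abs_sub _ _
      _ ≤ |e1| + |e2| + |e3| + |e4| + |e5| + |e6| + |e7| + |e8| := by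
          have := abs_add_le e1 e2; linarith
  have coeff : 1 + 2 * m * (β + 1) + (β + 1) + 2 * m * (β + 1) + 4 * m * (β + 1) ^ 2
      + 2 * m * (β + 1) + 2 * m ^ 2 * (β + 1) + 4 * m ^ 2 * (β + 1) ^ 2
      ≤ 32 * m ^ 2 * (β + 1) ^ 2 := by
    nlinarith [mul_le_mul hm hb zero_le_one (by linarith : (0:ℝ) ≤ m),
      sq_nonneg (m - 1), sq_nonneg (β + 1 - 1), sq_nonneg (m * (β + 1) - 1),
      mul_nonneg (by linarith : (0:ℝ) ≤ m - 1) (by linarith : (0:ℝ) ≤ β),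
      sq_nonneg (m * (β + 1))]
  calc |e1 + e2 - e3 + e4 - e5 + e6 - e7 + e8|
      ≤ |e1| + |e2| + |e3| + |e4| + |e5| + |e6| + |e7| + |e8| := tri
    _ ≤ 1 * a / (u * y) + 2 * m * (β + 1) * a / (u * y) + (β + 1) * a / (u * y)
        + 2 * m * (β + 1) * a / (u * y) + 4 * m * (β + 1) ^ 2 * a / (u * y)
        + 2 * m * (β + 1) * a / (u * y) + 2 * m ^ 2 * (β + 1) * a / (u * y)
        + 4 * m ^ 2 * (β + 1) ^ 2 * a / (u * y) := by
          gcongr ?_ + ?_ + ?_ + ?_ + ?_ + ?_ + ?_ + ?_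
          · exact as17_b1 ha hu hy hβ hβy hyt
          · exact as17_b2 hm ha hu hy hβ hyt hD2
          · exact as17_b3 ha hu hy hβ hyt hrr hrt
          · exact as17_b4 hm ha hu hy hβ hβy hyt hrr hrt hD2
          · exact as17_b5 hm ha hu hy hβ hyt hrr hrt hD2
          · exact as17_b6 hm ha hu hy hβ hβy hyt hrr hrt hD2
          · exact as17_b7 hm ha hu hy hβ hrr hD2
          · exact as17_b8 hm ha hu hy hβ hyt hrr hrt hD2
    _ ≤ 32 * a * m ^ 2 * (β + 1) ^ 2 / (u * y) := by
        rw [← add_div, ← add_div, ← add_div, ← add_div,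
          ← add_div, ← add_div, ← add_div, div_le_div_iff₀ hP hP]
        nlinarith [mul_le_mul_of_nonneg_left coeff ha.le, mul_pos hP hP,
          mul_le_mul_of_nonneg_right (mul_le_mul_of_nonneg_left coeff ha.le) hP.le]

end AuxStmt17

theorem stmt_17 (n : ℕ) (hn : 2 ≤ n) (α β : ℝ) (hβ : 0 ≤ β) (hαβ : β < α) :
    ∃ C r₀ : ℝ, 0 < C ∧ 1 < r₀ ∧
      ∀ r : ℝ, r₀ ≤ r → |RscalFJ n α β r| ≤ C * (Real.log r) ^ (-(β + 1)) := by
  have hα0 : 0 < α := lt_of_le_of_lt hβ hαβ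
  set m : ℝ := (n : ℝ) - 1 with hm_def
  have hm : 1 ≤ m := by
    have : (2:ℝ) ≤ (n:ℝ) := by exact_mod_cast hn
    simp [hm_def]; linarith
  set a : ℝ := α ^ β with ha_def
  have ha : 0 < a := rpow_pos_of_pos hα0 β
  refine ⟨32 * a * m ^ 2 * (β + 1) ^ 2, max 5 (Real.exp (α + 1)), by positivity,
    lt_of_lt_of_le (by norm_num) (le_max_left _ _), ?_⟩
  intro r hr
  have hr5 : (5:ℝ) ≤ r := le_trans (le_max_left _ _) hr
  have hr0 : (0:ℝ) < r := by linarith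
  have hre : Real.exp (α + 1) ≤ r := le_trans (le_max_right _ _) hr
  have hlog : α + 1 ≤ Real.log r := by
    rw [← Real.log_exp (α + 1)]
    exact Real.log_le_log (exp_pos _) hre
  have hlogr0 : 0 < Real.log r := by linarith
  set t : ℝ := 1 + r ^ 2 with ht_def
  have ht0 : (0:ℝ) < t := by positivity
  have hrr : (0:ℝ) < r ^ 2 := by positivity
  have hrt : r ^ 2 ≤ t := by simp [ht_def]
  have hlogt : 2 * Real.log r ≤ Real.log t := by
    have h1 : Real.log (r ^ 2) ≤ Real.log t :=
      Real.log_le_log (by positivity) (by simp [ht_def])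
    rwa [Real.log_pow, Nat.cast_ofNat] at h1
  set y : ℝ := α + Real.log t with hy_def
  have hy2 : 2 ≤ y := by
    have : Real.log t ≥ 2 * (α + 1) := by linarith
    simp only [hy_def]; linarith
  have hy0 : (0:ℝ) < y := by linarith
  have hy2α : 2 * α ≤ y := by
    have : Real.log t ≥ 2 * (α + 1) := by linarith
    simp only [hy_def]; linarith
  have hβy : β ≤ y := by nlinarith
  have hyt : y ≤ t := by
    have hst : Real.sqrt t ≤ 2 * r := by
      have h4 : t ≤ (2 * r) ^ 2 := by simp only [ht_def]; nlinarith
      calc Real.sqrt t ≤ Real.sqrt ((2 * r) ^ 2) := Real.sqrt_le_sqrt h4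
        _ = 2 * r := Real.sqrt_sq (by linarith)
    have hlt : Real.log t ≤ 2 * (Real.sqrt t - 1) := by
      have h1 : Real.log (Real.sqrt t) ≤ Real.sqrt t - 1 :=
        Real.log_le_sub_one_of_pos (Real.sqrt_pos.mpr ht0)
      rw [Real.log_sqrt ht0.le] at h1
      linarith
    have hαr : α ≤ r - 1 := by
      have := Real.log_le_sub_one_of_pos hr0
      linarith
    have : y ≤ (r - 1) + (2 * (2 * r) - 2) := by
      simp only [hy_def]; linarith
    simp only [ht_def]; nlinarith
  set u : ℝ := y ^ β with hu_def
  have hu : 0 < u := rpow_pos_of_pos hy0 β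
  have hub : y ^ (β + 1) = u * y := by rw [hu_def, Real.rpow_add_one hy0.ne']
  have hab : α ^ (β + 1) = a * α := by rw [ha_def, Real.rpow_add_one hα0.ne']
  set D : ℝ := y ^ (β + 1) - α ^ (β + 1) with hD_def
  have hD2 : u * y ≤ 2 * D := by
    have s1 : (2:ℝ) ≤ (2:ℝ) ^ (β + 1) := by
      have := Real.rpow_le_rpow_of_exponent_le (by norm_num : (1:ℝ) ≤ 2)
        (by linarith : (1:ℝ) ≤ β + 1)
      rwa [Real.rpow_one] at this
    have s2 : (2:ℝ) ^ (β + 1) * α ^ (β + 1) = (2 * α) ^ (β + 1) :=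
      (Real.mul_rpow (by norm_num) hα0.le).symm
    have s3 : (2 * α) ^ (β + 1) ≤ y ^ (β + 1) :=
      Real.rpow_le_rpow (by positivity) hy2α (by linarith)
    have s4 : 2 * α ^ (β + 1) ≤ 2 ^ (β + 1) * α ^ (β + 1) :=
      mul_le_mul_of_nonneg_right s1 (Real.rpow_nonneg hα0.le _)
    simp only [hD_def]
    rw [hub]
    linarith
  have hrw : RscalFJ n α β r =
      a * t / u * ((β / y - 1) / t ^ 2)
      + a * t / u * (m * (β + 1) * u / (D * t))
      - a * t / u * (β * r ^ 2 / (y ^ 2 * t ^ 2))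
      + a * t / u * (m * (β + 1) * (u / y) * (β - y) * r ^ 2 / (D * t ^ 2))
      - a * t / u * (m * (β + 1) ^ 2 * u ^ 2 * r ^ 2 / (D ^ 2 * t ^ 2))
      + m * ((β + 1) * a * r ^ 2 / D) * ((β / y - 1) / t)
      - m * ((β + 1) * a * r ^ 2 / D) * (m / r ^ 2)
      + m * ((β + 1) * a * r ^ 2 / D) * (m * (β + 1) * u / (D * t)) := by
    have hβ1 : y ^ (β - 1) = u / y := by
      rw [hu_def, ← Real.rpow_sub_one hy0.ne']
    have h2β : y ^ (2 * β) = u ^ 2 := by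
      rw [hu_def, ← Real.rpow_natCast (y ^ β) 2, ← Real.rpow_mul hy0.le]
      norm_num [mul_comm]
    simp only [RscalFJ, ← hy_def, ← ht_def, ← hD_def, ← hu_def, ← ha_def, ← hm_def,
      hβ1, h2β]
    ring
  rw [hrw]
  have hmain := aux_stmt17 m a u y t D (r ^ 2) β hm ha hu hy2 hβ hβy hyt hrr hrt hD2
  refine hmain.trans ?_
  have hinv : (1:ℝ) / (u * y) ≤ (Real.log r) ^ (-(β + 1)) := by
    have hle : Real.log r ≤ y := by
      simp only [hy_def]; nlinarith
    have h1 : (Real.log r) ^ (β + 1) ≤ y ^ (β + 1) :=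
      Real.rpow_le_rpow hlogr0.le hle (by linarith)
    have h2 : (0:ℝ) < (Real.log r) ^ (β + 1) := rpow_pos_of_pos hlogr0 _
    rw [Real.rpow_neg hlogr0.le, ← hub, one_div]
    exact inv_anti₀ h2 h1
  calc 32 * a * m ^ 2 * (β + 1) ^ 2 / (u * y)
      = 32 * a * m ^ 2 * (β + 1) ^ 2 * (1 / (u * y)) := by ring
    _ ≤ 32 * a * m ^ 2 * (β + 1) ^ 2 * (Real.log r) ^ (-(β + 1)) := by
        apply mul_le_mul_of_nonneg_left hinv (by positivity)
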